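/- arXiv:1309.7511 — 4 statements merged into one kernel-verified Lean document; each statement's English description precedes it below -/
import Mathlib

section
/- The congruence lattice of any lattice L is a distributive lattice. -/
/-- A congruence of a lattice: an equivalence relation compatible with `⊔` and `⊓`. -/
structure LatCon (L : Type*) [Lattice L] extends Setoid L where
  sup_comp : ∀ {a b c d : L}, r a b → r c d → r (a ⊔ c) (b ⊔ d)
  inf_comp : ∀ {a b c d : L}, r a b → r c d → r (a ⊓ c) (b ⊓ d)

namespace LatCon
variable {L : Type*} [Lattice L]

instance : PartialOrder (LatCon L) where
  le c d := ∀ a b : L, c.r a b → d.r a b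
  le_refl _ _ _ h := h
  le_trans _ _ _ h₁ h₂ a b h := h₂ a b (h₁ a b h)
  le_antisymm c d h₁ h₂ := by
    cases c with | mk cs csup cinf =>
    cases d with | mk ds dsup dinf =>
    have : cs = ds := Setoid.ext fun {a b} => ⟨h₁ a b, h₂ a b⟩
    subst this
    rfl


instance : InfSet (LatCon L) where
  sInf s :=
  { r := fun a b => ∀ c ∈ s, c.r a b
    iseqv := ⟨fun a c hc => c.iseqv.refl a, fun h c hc => c.iseqv.symm (h c hc),
      fun h h' c hc => c.iseqv.trans (h c hc) (h' c hc)⟩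
    sup_comp := fun h h' c hc => c.sup_comp (h c hc) (h' c hc)
    inf_comp := fun h h' c hc => c.inf_comp (h c hc) (h' c hc) }

/-- The congruences of a lattice form a complete lattice under inclusion, with meets
given by intersection. -/
instance : CompleteLattice (LatCon L) :=
  completeLatticeOfInf _ fun _ =>
    ⟨fun c hc _ _ h => h c hc, fun _ hd _ _ h c hc => hd hc _ _ h⟩

end LatCon


namespace FunayamaNakayama
variable {L : Type*} [Lattice L]

/-- Intersection of two lattice congruences, as a congruence. -/
private def interCon (x y : LatCon L) : LatCon L where
  r a b := x.r a b ∧ y.r a b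
  iseqv := ⟨fun a => ⟨x.iseqv.refl a, y.iseqv.refl a⟩,
    fun h => ⟨x.iseqv.symm h.1, y.iseqv.symm h.2⟩,
    fun h h' => ⟨x.iseqv.trans h.1 h'.1, y.iseqv.trans h.2 h'.2⟩⟩
  sup_comp h h' := ⟨x.sup_comp h.1 h'.1, y.sup_comp h.2 h'.2⟩
  inf_comp h h' := ⟨x.inf_comp h.1 h'.1, y.inf_comp h.2 h'.2⟩

private lemma interCon_le_inf (x y : LatCon L) : interCon x y ≤ x ⊓ y :=
  le_inf (fun _ _ h => h.1) (fun _ _ h => h.2)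

/-- Join of two lattice congruences: reflexive-transitive closure of the union. -/
private def joinCon (y z : LatCon L) : LatCon L where
  r := Relation.ReflTransGen (fun p q => y.r p q ∨ z.r p q)
  iseqv := ⟨fun _ => Relation.ReflTransGen.refl,
    fun h => (@Relation.ReflTransGen.stdSymm _ _
      ⟨fun _ _ hs => hs.imp y.iseqv.symm z.iseqv.symm⟩).symm _ _ h,
    fun h h' => h.trans h'⟩
  sup_comp {a b c d} h h' := by
    have h1 : Relation.ReflTransGen (fun p q => y.r p q ∨ z.r p q) (a ⊔ c) (b ⊔ c) :=
      Relation.ReflTransGen.lift (· ⊔ c)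
        (fun p q hpq => hpq.imp (fun hy => y.sup_comp hy (y.iseqv.refl c))
          (fun hz => z.sup_comp hz (z.iseqv.refl c))) _ _ h
    have h2 : Relation.ReflTransGen (fun p q => y.r p q ∨ z.r p q) (b ⊔ c) (b ⊔ d) :=
      Relation.ReflTransGen.lift (b ⊔ ·)
        (fun p q hpq => hpq.imp (fun hy => y.sup_comp (y.iseqv.refl b) hy)
          (fun hz => z.sup_comp (z.iseqv.refl b) hz)) _ _ h'
    exact h1.trans h2
  inf_comp {a b c d} h h' := by
    have h1 : Relation.ReflTransGen (fun p q => y.r p q ∨ z.r p q) (a ⊓ c) (b ⊓ c) :=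
      Relation.ReflTransGen.lift (· ⊓ c)
        (fun p q hpq => hpq.imp (fun hy => y.inf_comp hy (y.iseqv.refl c))
          (fun hz => z.inf_comp hz (z.iseqv.refl c))) _ _ h
    have h2 : Relation.ReflTransGen (fun p q => y.r p q ∨ z.r p q) (b ⊓ c) (b ⊓ d) :=
      Relation.ReflTransGen.lift (b ⊓ ·)
        (fun p q hpq => hpq.imp (fun hy => y.inf_comp (y.iseqv.refl b) hy)
          (fun hz => z.inf_comp (z.iseqv.refl b) hz)) _ _ h'
    exact h1.trans h2

private lemma sup_le_joinCon (y z : LatCon L) : y ⊔ z ≤ joinCon y z :=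
  sup_le (fun _ _ h => Relation.ReflTransGen.single (Or.inl h))
    (fun _ _ h => Relation.ReflTransGen.single (Or.inr h))

end FunayamaNakayama

open FunayamaNakayama in
/-- **Funayama–Nakayama.** The congruence lattice of any lattice is distributive. -/
theorem latCon_inf_sup_distrib (L : Type*) [Lattice L] (x y z : LatCon L) :
    x ⊓ (y ⊔ z) = (x ⊓ y) ⊔ (x ⊓ z) := by
  refine le_antisymm ?_ (le_inf (sup_le inf_le_left inf_le_left)
    (sup_le (le_sup_left.trans' inf_le_right) (le_sup_right.trans' inf_le_right)))
  intro a b h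
  have hx : x.r a b := inf_le_left (a := x) (b := y ⊔ z) a b h
  have hyz : (joinCon y z).r a b :=
    sup_le_joinCon y z a b (inf_le_right (a := x) (b := y ⊔ z) a b h)
  -- x relates a ⊓ b and a ⊔ b
  have hxib : x.r (a ⊓ b) b := by
    have := x.inf_comp hx (x.iseqv.refl b)
    simpa using this
  have hxbs : x.r b (a ⊔ b) := by
    have := x.sup_comp (x.iseqv.symm hx) (x.iseqv.refl b)
    simpa using this
  have hxis : x.r (a ⊓ b) (a ⊔ b) := x.iseqv.trans hxib hxbs
  -- the "flattening" map into the interval [a ⊓ b, a ⊔ b]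
  set m : L → L := fun e => (e ⊔ a ⊓ b) ⊓ (a ⊔ b) with hm
  have hxm : ∀ e : L, x.r (a ⊓ b) (m e) := by
    intro e
    have := x.inf_comp (x.iseqv.refl (e ⊔ a ⊓ b)) hxis
    simpa [hm, inf_of_le_right (le_sup_right : a ⊓ b ≤ e ⊔ a ⊓ b)] using this
  set T : LatCon L := (x ⊓ y) ⊔ (x ⊓ z) with hT
  have key : ∀ e : L, (joinCon y z).r a e → T.r (m a) (m e) := by
    intro e' he'
    induction he' with
    | refl => exact T.iseqv.refl _
    | tail _ hs ih =>
      rename_i e f _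
      refine T.iseqv.trans ih ?_
      have hxef : x.r (m e) (m f) := x.iseqv.trans (x.iseqv.symm (hxm e)) (hxm f)
      rcases hs with hy | hz
      · have hyef : y.r (m e) (m f) :=
          y.inf_comp (y.sup_comp hy (y.iseqv.refl (a ⊓ b))) (y.iseqv.refl (a ⊔ b))
        exact le_sup_left (a := x ⊓ y) (b := x ⊓ z) (m e) (m f)
          (interCon_le_inf x y (m e) (m f) ⟨hxef, hyef⟩)
      · have hzef : z.r (m e) (m f) :=
          z.inf_comp (z.sup_comp hz (z.iseqv.refl (a ⊓ b))) (z.iseqv.refl (a ⊔ b))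
        exact le_sup_right (a := x ⊓ y) (b := x ⊓ z) (m e) (m f)
          (interCon_le_inf x z (m e) (m f) ⟨hxef, hzef⟩)
  have hma : m a = a := by
    simp [hm, sup_of_le_left (inf_le_left : a ⊓ b ≤ a),
      inf_of_le_left (le_sup_left : a ≤ a ⊔ b)]
  have hmb : m b = b := by
    simp [hm, sup_of_le_left (inf_le_right : a ⊓ b ≤ b),
      inf_of_le_left (le_sup_right : b ≤ a ⊔ b)]
  have key' := key b hyz
  rw [hma, hmb] at key'
  exact key'
end

section
/- Every finite sectionally complemented lattice is regular: each congruence is determined by any one of its congruence classes. -/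
/-- A lattice is regular if each congruence is determined by any one of its classes:
two congruences having a congruence class in common are equal. -/
def RegularLattice (L : Type*) [Lattice L] : Prop :=
  ∀ c d : LatCon L, (∃ a b : L, {x | c.r x a} = {x | d.r x b}) → c = d

/-- A lattice with least element is sectionally complemented if every interval `[⊥, b]`
is complemented. -/
def SectionallyComplemented (L : Type*) [Lattice L] [OrderBot L] : Prop :=
  ∀ a b : L, a ≤ b → ∃ c, a ⊓ c = ⊥ ∧ a ⊔ c = b

section AuxLemmas
variable {L : Type} [Lattice L] [OrderBot L]

/-- If two congruences have the same class of `⊥` (one direction suffices for `≤`),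
then one is below the other, in a sectionally complemented lattice. -/
private lemma LatCon.le_of_bot_class (h : SectionallyComplemented L) (c d : LatCon L)
    (hbot : ∀ x : L, c.r x ⊥ → d.r x ⊥) : c ≤ d := by
  intro a b hab
  have hba := c.iseqv.symm hab
  have huv : c.r (a ⊓ b) (a ⊔ b) := by
    have h1 : c.r (a ⊓ b) b := by simpa using c.inf_comp hab (c.iseqv.refl b)
    have h2 : c.r a (a ⊔ b) := by simpa using c.sup_comp (c.iseqv.refl a) hab
    exact c.iseqv.trans h1 (c.iseqv.trans hba h2)
  obtain ⟨s, hs1, hs2⟩ := h (a ⊓ b) (a ⊔ b) (inf_le_left.trans le_sup_left)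
  have hsv : s ≤ a ⊔ b := le_sup_right.trans hs2.le
  have hsbot : c.r s ⊥ := by
    have h3 := c.inf_comp (c.iseqv.refl s) (c.iseqv.symm huv)
    -- c.r (s ⊓ (a ⊔ b)) (s ⊓ (a ⊓ b))
    rwa [inf_eq_left.mpr hsv, inf_comm s (a ⊓ b), hs1] at h3
  have hd : d.r ⊥ s := d.iseqv.symm (hbot s hsbot)
  have hduv : d.r (a ⊓ b) (a ⊔ b) := by
    have h4 := d.sup_comp (d.iseqv.refl (a ⊓ b)) hd
    rwa [sup_bot_eq, hs2] at h4
  have hav : d.r a (a ⊔ b) := by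
    have h5 := d.sup_comp (d.iseqv.refl a) hduv
    rwa [sup_inf_self, ← sup_assoc, sup_idem] at h5
  have hbv : d.r b (a ⊔ b) := by
    have h6 := d.sup_comp (d.iseqv.refl b) hduv
    rwa [inf_comm a b, sup_inf_self, sup_comm b (a ⊔ b), sup_assoc, sup_idem] at h6
  exact d.iseqv.trans hav (d.iseqv.symm hbv)

/-- Core step: if `m` is the least element of a common congruence class of `c` and `d`,
then the `⊥`-class of `c` is contained in that of `d`. -/
private lemma LatCon.bot_class_subset (h : SectionallyComplemented L) (c d : LatCon L)
    (a b m : L) (hmA : c.r m a) (hmin : ∀ y : L, c.r y a → m ≤ y)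
    (hAB : ∀ x : L, c.r x a ↔ d.r x b) (x : L) (hx : c.r x ⊥) : d.r x ⊥ := by
  have hxm : c.r (x ⊓ m) ⊥ := by
    have := c.inf_comp hx (c.iseqv.refl m)
    rwa [bot_inf_eq] at this
  obtain ⟨t, ht1, ht2⟩ := h (x ⊓ m) m inf_le_right
  have hct : c.r t m := by
    have h1 := c.sup_comp (c.iseqv.refl t) hxm
    rw [sup_bot_eq, sup_comm t (x ⊓ m), ht2] at h1
    exact c.iseqv.symm h1
  have htm : t = m := le_antisymm (le_sup_right.trans ht2.le)
    (hmin t (c.iseqv.trans hct hmA))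
  have hbot : x ⊓ m = ⊥ := by
    have h2 : (x ⊓ m) ⊓ m = ⊥ := htm ▸ ht1
    rwa [inf_assoc, inf_idem] at h2
  have h3 : c.r (x ⊔ m) a := by
    have := c.sup_comp hx (c.iseqv.refl m)
    rw [bot_sup_eq] at this
    exact c.iseqv.trans this hmA
  have h4 : d.r (x ⊔ m) b := (hAB _).mp h3
  have h5 : d.r m b := (hAB m).mp hmA
  have h6 : d.r (x ⊔ m) m := d.iseqv.trans h4 (d.iseqv.symm h5)
  have h7 := d.inf_comp h6 (d.iseqv.refl x)
  rwa [inf_comm (x ⊔ m) x, inf_sup_self, inf_comm m x, hbot] at h7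

end AuxLemmas

/-- Every finite sectionally complemented lattice is regular. -/
theorem regular_of_sectionally_complemented
    (L : Type) [Lattice L] [OrderBot L] [Fintype L]
    (h : SectionallyComplemented L) : RegularLattice L := by
  rintro c d ⟨a, b, hset⟩
  have hAB : ∀ x : L, c.r x a ↔ d.r x b := fun x => Set.ext_iff.mp hset x
  have hBA : ∀ x : L, d.r x b ↔ c.r x a := fun x => (hAB x).symm
  classical
  set S : Finset L := Finset.univ.filter (fun x => c.r x a) with hS
  have hne : S.Nonempty := ⟨a, by simp [hS, c.iseqv.refl a]⟩
  set m : L := S.inf' hne id with hm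
  have hmA : c.r m a := by
    have : m ∈ {x : L | c.r x a} := by
      apply Finset.inf'_mem {x : L | c.r x a}
      · intro p hp q hq
        have := c.inf_comp hp hq
        simpa using this
      · intro i hi
        simpa [hS] using hi
    exact this
  have hmin : ∀ y : L, c.r y a → m ≤ y := by
    intro y hy
    exact Finset.inf'_le id (by simp [hS, hy])
  have hdmB : d.r m b := (hAB m).mp hmA
  have hdmin : ∀ y : L, d.r y b → m ≤ y := fun y hy => hmin y ((hBA y).mp hy)
  have h₁ : ∀ x : L, c.r x ⊥ → d.r x ⊥ :=
    LatCon.bot_class_subset h c d a b m hmA hmin hAB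
  have h₂ : ∀ x : L, d.r x ⊥ → c.r x ⊥ :=
    LatCon.bot_class_subset h d c b a m hdmB hdmin hBA
  exact le_antisymm (LatCon.le_of_bot_class h c d h₁) (LatCon.le_of_bot_class h d c h₂)
end

section
/- For a bounded lattice K, the set M₃[K] of boolean triples ⟨x,y,z⟩ ∈ K³, i.e., triples satisfying x = (x∨y)∧(x∨z), y = (y∨x)∧(y∨z), z = (z∨x)∧(z∨y), forms a lattice under the componentwise order, and it is a bounded lattice. -/
/-- **Grätzer–Wehrung.** For a bounded lattice `K`, the set `M₃[K]` of boolean triples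
`⟨x,y,z⟩ ∈ K³` (those satisfying `x = (x∨y)∧(x∨z)`, `y = (y∨x)∧(y∨z)`,
`z = (z∨x)∧(z∨y)`) forms a lattice under the componentwise order: it is closed under
componentwise meet, every pair of boolean triples has a least upper bound (and a greatest
lower bound) within the set, and it is bounded. -/
theorem boolean_triples_form_bounded_lattice (K : Type) [Lattice K] [BoundedOrder K] :
    let B : Set (K × K × K) :=
      {t | t.1 = (t.1 ⊔ t.2.1) ⊓ (t.1 ⊔ t.2.2) ∧
           t.2.1 = (t.2.1 ⊔ t.1) ⊓ (t.2.1 ⊔ t.2.2) ∧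
           t.2.2 = (t.2.2 ⊔ t.1) ⊓ (t.2.2 ⊔ t.2.1)}
    (∀ x y : K × K × K, x ∈ B → y ∈ B → x ⊓ y ∈ B) ∧
    (∀ x y : B, ∃ z : B, IsGLB {x, y} z) ∧
    (∀ x y : B, ∃ z : B, IsLUB {x, y} z) ∧
    (∃ top : B, IsTop top) ∧ (∃ bot : B, IsBot bot) := by
  intro B
  -- the closure map
  set p : K × K × K → K × K × K := fun t =>
    ((t.1 ⊔ t.2.1) ⊓ (t.1 ⊔ t.2.2),
     (t.2.1 ⊔ t.1) ⊓ (t.2.1 ⊔ t.2.2),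
     (t.2.2 ⊔ t.1) ⊓ (t.2.2 ⊔ t.2.1)) with hp
  have hmemB : ∀ t : K × K × K, t ∈ B ↔ p t = t := by
    intro t
    constructor
    · rintro ⟨h1, h2, h3⟩
      simp only [hp, Prod.ext_iff]
      exact ⟨h1.symm, h2.symm, h3.symm⟩
    · intro h
      have := congrArg Prod.fst h
      have h2 := congrArg (fun t : K × K × K => t.2.1) h
      have h3 := congrArg (fun t : K × K × K => t.2.2) h
      exact ⟨this.symm, h2.symm, h3.symm⟩
  have hext : ∀ t : K × K × K, t ≤ p t := by
    intro t
    refine ⟨le_inf le_sup_left le_sup_left, le_inf le_sup_left le_sup_left,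
      le_inf le_sup_left le_sup_left⟩
  have hcl : ∀ t : K × K × K, p t ∈ B := by
    intro ⟨x, y, z⟩
    refine ⟨le_antisymm (le_inf le_sup_left le_sup_left) ?_,
            le_antisymm (le_inf le_sup_left le_sup_left) ?_,
            le_antisymm (le_inf le_sup_left le_sup_left) ?_⟩
    · exact inf_le_inf (sup_le inf_le_left (inf_le_left.trans (sup_comm y x).le))
        (sup_le inf_le_right (inf_le_left.trans (sup_comm z x).le))
    · exact inf_le_inf (sup_le inf_le_left (inf_le_left.trans (sup_comm x y).le))
        (sup_le inf_le_right (inf_le_right.trans (sup_comm z y).le))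
    · exact inf_le_inf (sup_le inf_le_left (inf_le_right.trans (sup_comm x z).le))
        (sup_le inf_le_right (inf_le_right.trans (sup_comm y z).le))
  have hmono : ∀ s t : K × K × K, s ≤ t → p s ≤ p t := by
    rintro ⟨a, b, c⟩ ⟨x, y, z⟩ ⟨h1, h2, h3⟩
    exact ⟨inf_le_inf (sup_le_sup h1 h2) (sup_le_sup h1 h3),
      inf_le_inf (sup_le_sup h2 h1) (sup_le_sup h2 h3),
      inf_le_inf (sup_le_sup h3 h1) (sup_le_sup h3 h2)⟩
  have hmeet : ∀ x y : K × K × K, x ∈ B → y ∈ B → x ⊓ y ∈ B := by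
    rintro ⟨a, b, c⟩ ⟨x, y, z⟩ ⟨ha, hb, hc⟩ ⟨hx, hy, hz⟩
    refine ⟨le_antisymm (le_inf le_sup_left le_sup_left) ?_,
            le_antisymm (le_inf le_sup_left le_sup_left) ?_,
            le_antisymm (le_inf le_sup_left le_sup_left) ?_⟩
    · refine le_inf (le_trans ?_ ha.ge) (le_trans ?_ hx.ge)
      · exact inf_le_inf (sup_le_sup inf_le_left inf_le_left)
          (sup_le_sup inf_le_left inf_le_left)
      · exact inf_le_inf (sup_le_sup inf_le_right inf_le_right)
          (sup_le_sup inf_le_right inf_le_right)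
    · refine le_inf (le_trans ?_ hb.ge) (le_trans ?_ hy.ge)
      · exact inf_le_inf (sup_le_sup inf_le_left inf_le_left)
          (sup_le_sup inf_le_left inf_le_left)
      · exact inf_le_inf (sup_le_sup inf_le_right inf_le_right)
          (sup_le_sup inf_le_right inf_le_right)
    · refine le_inf (le_trans ?_ hc.ge) (le_trans ?_ hz.ge)
      · exact inf_le_inf (sup_le_sup inf_le_left inf_le_left)
          (sup_le_sup inf_le_left inf_le_left)
      · exact inf_le_inf (sup_le_sup inf_le_right inf_le_right)
          (sup_le_sup inf_le_right inf_le_right)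
  refine ⟨hmeet, ?_, ?_, ?_, ?_⟩
  · -- GLB
    rintro ⟨x, hx⟩ ⟨y, hy⟩
    refine ⟨⟨x ⊓ y, hmeet x y hx hy⟩, ?_, ?_⟩
    · rintro z (rfl | rfl)
      · exact Subtype.mk_le_mk.mpr inf_le_left
      · exact Subtype.mk_le_mk.mpr inf_le_right
    · rintro ⟨z, hz⟩ h
      exact Subtype.mk_le_mk.mpr (le_inf (Subtype.mk_le_mk.mp (h (Set.mem_insert _ _)))
        (Subtype.mk_le_mk.mp (h (Set.mem_insert_of_mem _ rfl))))
  · -- LUB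
    rintro ⟨x, hx⟩ ⟨y, hy⟩
    refine ⟨⟨p (x ⊔ y), hcl _⟩, ?_, ?_⟩
    · rintro z (rfl | rfl)
      · exact Subtype.mk_le_mk.mpr (le_trans le_sup_left (hext _))
      · exact Subtype.mk_le_mk.mpr (le_trans le_sup_right (hext _))
    · rintro ⟨z, hz⟩ h
      have hxy : x ⊔ y ≤ z :=
        sup_le (Subtype.mk_le_mk.mp (h (Set.mem_insert _ _)))
          (Subtype.mk_le_mk.mp (h (Set.mem_insert_of_mem _ rfl)))
      have := hmono _ _ hxy
      rw [(hmemB z).mp hz] at this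
      exact Subtype.mk_le_mk.mpr this
  · -- Top
    refine ⟨⟨(⊤, ⊤, ⊤), ⟨by simp, by simp, by simp⟩⟩, ?_⟩
    rintro ⟨z, hz⟩
    exact Subtype.mk_le_mk.mpr ⟨le_top, le_top, le_top⟩
  · -- Bot
    refine ⟨⟨(⊥, ⊥, ⊥), ⟨by simp, by simp, by simp⟩⟩, ?_⟩
    rintro ⟨z, hz⟩
    exact Subtype.mk_le_mk.mpr ⟨bot_le, bot_le, bot_le⟩
end

section
/- Every finite uniform lattice is regular: if all congruence classes of every congruence of a finite lattice L have the same cardinality, then every congruence of L is determined by any one of its classes. -/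
/-- A lattice is uniform if, for every congruence, all congruence classes have the same
cardinality. -/
def UniformLattice (L : Type*) [Lattice L] : Prop :=
  ∀ c : LatCon L, ∀ a b : L, Nat.card {x | c.r x a} = Nat.card {x | c.r x b}

/-- The meet of two lattice congruences. -/
def LatCon.meet {L : Type*} [Lattice L] (c d : LatCon L) : LatCon L where
  r a b := c.r a b ∧ d.r a b
  iseqv := ⟨fun a => ⟨c.refl a, d.refl a⟩,
    fun ⟨h1, h2⟩ => ⟨c.symm h1, d.symm h2⟩,
    fun ⟨h1, h2⟩ ⟨h3, h4⟩ => ⟨c.trans h1 h3, d.trans h2 h4⟩⟩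
  sup_comp := fun ⟨h1, h2⟩ ⟨h3, h4⟩ => ⟨c.sup_comp h1 h3, d.sup_comp h2 h4⟩
  inf_comp := fun ⟨h1, h2⟩ ⟨h3, h4⟩ => ⟨c.inf_comp h1 h3, d.inf_comp h2 h4⟩

/-- If `c` and `d` share the class of `a`, then `c ≤ d`. -/
lemma le_of_shared_class (L : Type) [Lattice L] [Fintype L]
    (h : UniformLattice L) (c d : LatCon L) (a : L)
    (hcd : {x | c.r x a} = {x | d.r x a}) : c ≤ d := by
  intro x y hxy
  set m := c.meet d with hm
  -- class of a under m equals class under c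
  have hma : {z | m.r z a} = {z | c.r z a} := by
    ext z
    simp only [Set.mem_setOf_eq, hm, LatCon.meet]
    constructor
    · exact fun ⟨h1, _⟩ => h1
    · intro h1
      refine ⟨h1, ?_⟩
      have := hcd ▸ (Set.mem_setOf_eq ▸ h1 : z ∈ {x | c.r x a})
      exact this
  have hsub : {z | m.r z x} ⊆ {z | c.r z x} := fun z hz => hz.1
  have hcard : Nat.card {z | c.r z x} ≤ Nat.card {z | m.r z x} := by
    have e1 : Nat.card {z | m.r z x} = Nat.card {z | m.r z a} := h m x a
    have e2 : Nat.card {z | c.r z x} = Nat.card {z | c.r z a} := h c x a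
    rw [e1, e2, hma]
  have heq : {z | m.r z x} = {z | c.r z x} := by
    apply Set.eq_of_subset_of_ncard_le hsub
    rwa [← Nat.card_coe_set_eq, ← Nat.card_coe_set_eq]
  have hy : y ∈ {z | c.r z x} := c.symm hxy
  rw [← heq] at hy
  exact d.symm hy.2

/-- Every finite uniform lattice is regular. -/
theorem regular_of_uniform (L : Type) [Lattice L] [Fintype L]
    (h : UniformLattice L) : RegularLattice L := by
  intro c d ⟨a, b, hab⟩
  -- a is in both classes, so d.r a b, and the d-class of b equals the d-class of a
  have ha : d.r a b := by
    have : a ∈ {x | c.r x a} := c.refl a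
    rw [hab] at this; exact this
  have hba : {x | d.r x b} = {x | d.r x a} := by
    ext z; simp only [Set.mem_setOf_eq]
    exact ⟨fun hz => d.trans hz (d.symm ha), fun hz => d.trans hz ha⟩
  have hcd : {x | c.r x a} = {x | d.r x a} := hab.trans hba
  exact le_antisymm (le_of_shared_class L h c d a hcd)
    (le_of_shared_class L h d c a hcd.symm)
end
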